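/- Let p be a prime not dividing the order of the Weyl group W of Φ. Then p is not a bad prime for Φ̌: for every subset Ψ̌ ⊆ Φ̌ that is closed in Φ̌ (i.e., (ℤ-span of Ψ̌) ∩ Φ̌ = Ψ̌), the quotient (ℤ-span of Φ̌)/(ℤ-span of Ψ̌) has no p-torsion; concretely, if v lies in the ℤ-span of Φ̌ and p·v lies in the ℤ-span of Ψ̌, then v lies in the ℤ-span of Ψ̌. -/

import Mathlib

/-- Let `Φ` be a finite, reduced, crystallographic root system with Weyl group
`W = ⟨s α : α ∈ Φ⟩`, and let `p` be a prime not dividing `|W|`.  Then `p` is not a bad prime for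
the coroot system `Φ̌`: for every subset `Ψ ⊆ Φ̌` that is closed in `Φ̌`
(i.e. `ℤΨ ∩ Φ̌ = Ψ`), the quotient `ℤΦ̌ / ℤΨ` has no `p`-torsion; concretely, if `v ∈ ℤΦ̌` and
`p • v ∈ ℤΨ`, then `v ∈ ℤΨ`. -/
theorem not_bad_prime_of_not_dvd_weyl_order
    {V V' : Type*} [AddCommGroup V] [Module ℚ V] [AddCommGroup V'] [Module ℚ V']
    [FiniteDimensional ℚ V] [FiniteDimensional ℚ V']
    (P : V →ₗ[ℚ] V' →ₗ[ℚ] ℚ) [P.IsPerfPair]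
    (Φ : Set V) (hfin : Φ.Finite) (coroot : V → V')
    (h2 : ∀ α ∈ Φ, P α (coroot α) = 2)
    (hcrys : ∀ α ∈ Φ, ∀ β ∈ Φ, ∃ n : ℤ, P β (coroot α) = (n : ℚ))
    (hred : ∀ α ∈ Φ, ∀ c : ℚ, c • α ∈ Φ → c = 1 ∨ c = -1)
    (s : V → (V ≃ₗ[ℚ] V))
    (hs_def : ∀ α ∈ Φ, ∀ v : V, s α v = v - (P v (coroot α)) • α)
    (hs_perm : ∀ α ∈ Φ, ∀ β ∈ Φ, s α β ∈ Φ)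
    (p : ℕ) (hp : p.Prime)
    (hpW : ¬ p ∣ Nat.card ↥(Subgroup.closure (s '' Φ)))
    (Ψ : Set V') (hΨ : Ψ ⊆ coroot '' Φ)
    (hclosed : (Submodule.span ℤ Ψ : Set V') ∩ (coroot '' Φ) = Ψ) :
    ∀ v ∈ Submodule.span ℤ (coroot '' Φ),
      (p : ℤ) • v ∈ Submodule.span ℤ Ψ → v ∈ Submodule.span ℤ Ψ := by
  classical
  intro v hv hpv
  set L : Submodule ℤ V' := Submodule.span ℤ (coroot '' Φ) with hLdef
  set M : Submodule ℤ V' := Submodule.span ℤ Ψ with hMdef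
  -- pairing extensionality
  have pairext : ∀ {f g : V'}, (∀ x : V, P x f = P x g) → f = g := by
    intro f g h
    apply (LinearMap.IsPerfPair.bijective_right P).injective
    ext x
    exact h x
  -- nonvanishing
  have coroot_ne : ∀ α ∈ Φ, coroot α ≠ 0 := by
    intro α hα h0
    have := h2 α hα
    rw [h0] at this
    simp at this
  have root_ne : ∀ α ∈ Φ, α ≠ 0 := by
    intro α hα h0
    have := h2 α hα
    rw [h0, map_zero, LinearMap.zero_apply] at this
    norm_num at this
  -- the Weyl group is finite
  set G := Subgroup.closure (s '' Φ) with hGdef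
  have hGfin : Finite ↥G := by
    rcases finite_or_infinite ↥G with h | h
    · exact h
    · exact absurd (Nat.card_eq_zero_of_infinite (α := ↥G) ▸ dvd_zero p) hpW
  -- reflections are involutions
  have hs_sq : ∀ α ∈ Φ, s α * s α = 1 := by
    intro α hα
    apply LinearEquiv.ext
    intro x
    have h1 : (s α * s α) x = s α (s α x) := rfl
    rw [h1, hs_def α hα x, hs_def α hα (x - P x (coroot α) • α)]
    simp only [map_sub, map_smul, LinearMap.sub_apply, LinearMap.smul_apply, h2 α hα,
      smul_eq_mul]
    rw [show (1 : V ≃ₗ[ℚ] V) x = x from rfl]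
    module
  -- the transpose action on V'
  set τ : (V ≃ₗ[ℚ] V) → (V' →ₗ[ℚ] V') := fun w =>
    (P.flip.toPerfPair.symm.toLinearMap).comp
      ((LinearMap.lcomp ℚ ℚ (w : V →ₗ[ℚ] V)).comp P.flip.toPerfPair.toLinearMap) with hτdef
  have hτ : ∀ (w : V ≃ₗ[ℚ] V) (f : V') (x : V), P x (τ w f) = P (w x) f := by
    intro w f x
    simp [hτdef, LinearMap.apply_toPerfPair_flip]
  have τ_mul : ∀ (w₁ w₂ : V ≃ₗ[ℚ] V) (f : V'), τ (w₁ * w₂) f = τ w₂ (τ w₁ f) := by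
    intro w₁ w₂ f
    apply pairext
    intro x
    rw [hτ, hτ, hτ]
    rfl
  have τ_refl : ∀ α ∈ Φ, ∀ f : V', τ (s α) f = f - (P α f) • coroot α := by
    intro α hα f
    apply pairext
    intro x
    rw [hτ, hs_def α hα x]
    simp only [map_sub, map_smul, LinearMap.sub_apply, LinearMap.smul_apply, smul_eq_mul]
    ring
  -- integrality of pairings with the coroot lattice
  have hint : ∀ α ∈ Φ, ∀ f ∈ L, ∃ n : ℤ, P α f = (n : ℚ) := by
    intro α hα f hf
    induction hf using Submodule.span_induction with
    | mem x hx =>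
      obtain ⟨β, hβ, rfl⟩ := hx
      exact hcrys β hβ α hα
    | zero => exact ⟨0, by simp⟩
    | add x y hx hy ihx ihy =>
      obtain ⟨n, hn⟩ := ihx
      obtain ⟨m, hm⟩ := ihy
      exact ⟨n + m, by rw [map_add, hn, hm]; push_cast; ring⟩
    | smul z x hx ihx =>
      obtain ⟨n, hn⟩ := ihx
      refine ⟨z * n, ?_⟩
      rw [map_zsmul, hn, zsmul_eq_mul]
      push_cast
      ring
  -- the reflection subgroup attached to Ψ
  set S : Set (V ≃ₗ[ℚ] V) := {w | ∃ α ∈ Φ, coroot α ∈ Ψ ∧ s α = w} with hSdef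
  set WΨ : Subgroup (V ≃ₗ[ℚ] V) := Subgroup.closure S with hWΨdef
  have hML : M ≤ L := Submodule.span_mono hΨ
  -- main stability / telescoping property
  have P1 : ∀ w ∈ WΨ,
      (∀ f, f ∈ L → τ w f ∈ L ∧ f - τ w f ∈ M) ∧
      (∀ f, f ∈ L → τ w⁻¹ f ∈ L ∧ f - τ w⁻¹ f ∈ M) := by
    intro w hw
    induction hw using Subgroup.closure_induction with
    | mem x hx =>
      obtain ⟨α, hα, hαΨ, rfl⟩ := hx
      have hinv : (s α)⁻¹ = s α := by
        rw [inv_eq_iff_mul_eq_one, hs_sq α hα]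
      have key : ∀ f, f ∈ L → τ (s α) f ∈ L ∧ f - τ (s α) f ∈ M := by
        intro f hf
        obtain ⟨n, hn⟩ := hint α hα f hf
        have hτf : τ (s α) f = f - (n : ℤ) • coroot α := by
          rw [τ_refl α hα f, hn, Int.cast_smul_eq_zsmul]
        have hcorL : coroot α ∈ L := Submodule.subset_span ⟨α, hα, rfl⟩
        constructor
        · rw [hτf]; exact Submodule.sub_mem L hf (Submodule.smul_mem L n hcorL)
        · rw [hτf]
          have : f - (f - (n : ℤ) • coroot α) = (n : ℤ) • coroot α := by abel
          rw [this]
          exact Submodule.smul_mem M n (Submodule.subset_span hαΨ)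
      exact ⟨key, by rw [hinv]; exact key⟩
    | one =>
      have h1 : ∀ f : V', τ 1 f = f := by
        intro f
        apply pairext
        intro x
        rw [hτ]
        rfl
      constructor <;>
      · intro f hf
        simp only [inv_one, h1]
        exact ⟨hf, by rw [sub_self]; exact Submodule.zero_mem M⟩
    | mul a b ha hb iha ihb =>
      constructor
      · intro f hf
        rw [τ_mul]
        obtain ⟨h1, h2'⟩ := iha.1 f hf
        obtain ⟨h3, h4⟩ := ihb.1 (τ a f) h1
        refine ⟨h3, ?_⟩
        have : f - τ b (τ a f) = (f - τ a f) + (τ a f - τ b (τ a f)) := by abel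
        rw [this]
        exact Submodule.add_mem M h2' h4
      · intro f hf
        rw [mul_inv_rev, τ_mul]
        obtain ⟨h1, h2'⟩ := ihb.2 f hf
        obtain ⟨h3, h4⟩ := iha.2 (τ b⁻¹ f) h1
        refine ⟨h3, ?_⟩
        have : f - τ a⁻¹ (τ b⁻¹ f) = (f - τ b⁻¹ f) + (τ b⁻¹ f - τ a⁻¹ (τ b⁻¹ f)) := by abel
        rw [this]
        exact Submodule.add_mem M h2' h4
    | inv a ha iha =>
      exact ⟨iha.2, by rw [inv_inv]; exact iha.1⟩
  -- M is stable
  have PM : ∀ w ∈ WΨ, ∀ m ∈ M, τ w m ∈ M := by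
    intro w hw m hm
    have hmL : m ∈ L := hML hm
    have h := ((P1 w hw).1 m hmL).2
    have : τ w m = m - (m - τ w m) := by abel
    rw [this]
    exact Submodule.sub_mem M hm h
  -- WΨ is a subgroup of the Weyl group
  have hle : WΨ ≤ G := by
    apply Subgroup.closure_mono
    rintro w ⟨α, hα, -, rfl⟩
    exact ⟨α, hα, rfl⟩
  have hWΨfin : Finite ↥WΨ :=
    Finite.of_injective (Subgroup.inclusion hle) (Subgroup.inclusion_injective hle)
  have : Fintype ↥WΨ := Fintype.ofFinite _
  have : Fintype ↥G := Fintype.ofFinite _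
  have hNdvd : Nat.card ↥WΨ ∣ Nat.card ↥G := Subgroup.card_dvd_of_le hle
  set N : ℕ := Nat.card ↥WΨ with hNdef
  have hpN : ¬ (p : ℤ) ∣ (N : ℤ) := by
    rw [Int.natCast_dvd_natCast]
    exact fun h => hpW (h.trans hNdvd)
  -- the averaged element
  set u : V' := ∑ w : ↥WΨ, τ (↑w) v with hudef
  -- u is orthogonal to all roots whose coroot lies in Ψ
  have hinv : ∀ α ∈ Φ, coroot α ∈ Ψ → P α u = 0 := by
    intro α hα hαΨ
    have hgen : s α ∈ WΨ := Subgroup.subset_closure ⟨α, hα, hαΨ, rfl⟩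
    have hfix : τ (s α) u = u := by
      rw [hudef, map_sum]
      have h1 : ∀ w : ↥WΨ, τ (s α) (τ (↑w) v) = τ (↑(w * ⟨s α, hgen⟩) : V ≃ₗ[ℚ] V) v := by
        intro w
        rw [← τ_mul]
        rfl
      rw [Finset.sum_congr rfl (fun w _ => h1 w)]
      exact Fintype.sum_equiv (Equiv.mulRight (⟨s α, hgen⟩ : ↥WΨ)) _ _ (fun w => rfl)
    rw [τ_refl α hα u] at hfix
    have h0 : P α u • coroot α = 0 := by
      have := sub_eq_self.mp hfix
      exact this
    rcases smul_eq_zero.mp h0 with h | h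
    · exact h
    · exact absurd h (coroot_ne α hα)
  -- p • u ∈ M
  have hpu : (p : ℤ) • u ∈ M := by
    rw [hudef, Finset.smul_sum]
    apply Submodule.sum_mem
    intro w _
    have : (p : ℤ) • τ (↑w : V ≃ₗ[ℚ] V) v = τ (↑w : V ≃ₗ[ℚ] V) ((p : ℤ) • v) := by
      rw [map_zsmul]
    rw [this]
    exact PM (↑w) w.2 _ hpv
  -- u lies in the ℚ-span of Ψ
  have hMQ : (M : Set V') ⊆ (Submodule.span ℚ Ψ : Set V') := by
    intro x hx
    have : M ≤ (Submodule.span ℚ Ψ).restrictScalars ℤ :=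
      Submodule.span_le.mpr (fun y hy => Submodule.subset_span hy)
    exact this hx
  have hUQ : u ∈ Submodule.span ℚ Ψ := by
    have h1 : (p : ℤ) • u ∈ Submodule.span ℚ Ψ := hMQ hpu
    have hp0 : (p : ℚ) ≠ 0 := by
      exact_mod_cast hp.ne_zero
    have h2' : u = (p : ℚ)⁻¹ • ((p : ℚ) • u) := by
      rw [smul_smul, inv_mul_cancel₀ hp0, one_smul]
    rw [h2']
    apply Submodule.smul_mem
    rwa [← Int.cast_smul_eq_zsmul ℚ] at h1
  -- an invariant positive-definite form on V
  set b : Module.Basis (Fin (Module.finrank ℚ V)) ℚ V := Module.finBasis ℚ V with hbdef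
  set B0 : V → V → ℚ := fun x y => ∑ i, b.repr x i * b.repr y i with hB0def
  set B : V → V → ℚ := fun x y => ∑ w : ↥G, B0 ((↑w : V ≃ₗ[ℚ] V) x) ((↑w : V ≃ₗ[ℚ] V) y)
    with hBdef
  have B0_nonneg : ∀ x, 0 ≤ B0 x x := by
    intro x
    apply Finset.sum_nonneg
    intro i _
    exact mul_self_nonneg _
  have B0_pos : ∀ x, x ≠ 0 → 0 < B0 x x := by
    intro x hx
    have hr : b.repr x ≠ 0 := fun h => hx (by
      have := congrArg b.repr.symm h
      simpa using this)
    obtain ⟨i, hi⟩ : ∃ i, b.repr x i ≠ 0 := by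
      by_contra h
      push_neg at h
      exact hr (Finsupp.ext h)
    apply Finset.sum_pos' (fun j _ => mul_self_nonneg _)
    exact ⟨i, Finset.mem_univ i, mul_self_pos.mpr hi⟩
  have B_pos : ∀ x, x ≠ 0 → 0 < B x x := by
    intro x hx
    apply Finset.sum_pos
    · intro w _
      exact B0_pos _ (by simp [hx])
    · exact ⟨1, Finset.mem_univ 1⟩
  have B_ne : ∀ α ∈ Φ, B α α ≠ 0 := fun α hα => (B_pos α (root_ne α hα)).ne'
  -- bilinearity lemmas
  have B0_add₁ : ∀ x y z, B0 (x + y) z = B0 x z + B0 y z := by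
    intro x y z
    simp only [hB0def, map_add, Finsupp.add_apply, add_mul]
    rw [Finset.sum_add_distrib]
  have B0_smul₁ : ∀ (c : ℚ) x z, B0 (c • x) z = c * B0 x z := by
    intro c x z
    simp only [hB0def, map_smul, Finsupp.smul_apply, smul_eq_mul, Finset.mul_sum]
    congr 1
    ext i
    ring
  have B0_symm : ∀ x y, B0 x y = B0 y x := by
    intro x y
    simp only [hB0def]
    congr 1
    ext i
    ring
  have B_add₁ : ∀ x y z, B (x + y) z = B x z + B y z := by
    intro x y z
    simp only [hBdef, map_add, B0_add₁]
    rw [Finset.sum_add_distrib]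
  have B_smul₁ : ∀ (c : ℚ) x z, B (c • x) z = c * B x z := by
    intro c x z
    simp only [hBdef, map_smul, B0_smul₁, Finset.mul_sum]
  have B_symm : ∀ x y, B x y = B y x := by
    intro x y
    simp only [hBdef]
    exact Finset.sum_congr rfl (fun w _ => B0_symm _ _)
  have B_zero₂ : ∀ x, B x 0 = 0 := by
    intro x
    have := B_smul₁ 0 0 x
    rw [zero_smul, zero_mul] at this
    rw [B_symm x 0, this]
  have B_neg₂ : ∀ x y, B x (-y) = - B x y := by
    intro x y
    have h := B_smul₁ (-1) y x
    rw [neg_one_smul] at h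
    rw [B_symm x (-y), h, B_symm y x]
    ring
  have B_sub₁ : ∀ x y z, B (x - y) z = B x z - B y z := by
    intro x y z
    have h := B_add₁ x (-y) z
    rw [sub_eq_add_neg, h]
    have h2' := B_smul₁ (-1) y z
    rw [neg_one_smul] at h2'
    rw [h2']
    ring
  have B_smul₂ : ∀ (c : ℚ) x z, B x (c • z) = c * B x z := by
    intro c x z
    rw [B_symm x (c • z), B_smul₁, B_symm]
  have B_add₂ : ∀ x y z, B x (y + z) = B x y + B x z := by
    intro x y z
    rw [B_symm x (y + z), B_add₁, B_symm, B_symm z x]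
  -- invariance of B
  have B_inv : ∀ g ∈ G, ∀ x y, B (g x) (g y) = B x y := by
    intro g hg x y
    simp only [hBdef]
    have h1 : ∀ w : ↥G, B0 ((↑w : V ≃ₗ[ℚ] V) (g x)) ((↑w : V ≃ₗ[ℚ] V) (g y))
        = B0 ((↑(w * ⟨g, hg⟩) : V ≃ₗ[ℚ] V) x) ((↑(w * ⟨g, hg⟩) : V ≃ₗ[ℚ] V) y) := by
      intro w
      rfl
    rw [Finset.sum_congr rfl (fun w _ => h1 w)]
    exact Fintype.sum_equiv (Equiv.mulRight (⟨g, hg⟩ : ↥G)) _ _ (fun w => rfl)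
  -- key identity relating B and the coroots
  have hkey : ∀ α ∈ Φ, ∀ x, B α α * (P x (coroot α)) = 2 * B x α := by
    intro α hα x
    have hsG : s α ∈ G := Subgroup.subset_closure ⟨α, hα, rfl⟩
    have h := B_inv (s α) hsG x α
    rw [hs_def α hα x, hs_def α hα α, h2 α hα] at h
    have hαα : α - (2 : ℚ) • α = -α := by module
    rw [hαα, B_neg₂, B_sub₁, B_smul₁] at h
    linarith
  -- elements of the ℚ-span of Ψ are represented by vectors in V via B
  set RΨ : Set V := {x | x ∈ Φ ∧ coroot x ∈ Ψ} with hRΨdef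
  have hrep : ∀ f ∈ Submodule.span ℚ Ψ, ∃ r ∈ Submodule.span ℚ RΨ,
      ∀ x, P x f = B x r := by
    intro f hf
    induction hf using Submodule.span_induction with
    | mem ψ hψ =>
      obtain ⟨α, hα, rfl⟩ := hΨ hψ
      refine ⟨(2 / B α α) • α, Submodule.smul_mem _ _ (Submodule.subset_span ⟨hα, hψ⟩), ?_⟩
      intro x
      rw [B_smul₂]
      have hk := hkey α hα x
      have hBα := B_ne α hα
      rw [div_mul_eq_mul_div, eq_div_iff hBα]
      linarith [hk]
    | zero =>
      exact ⟨0, Submodule.zero_mem _, fun x => by rw [map_zero, B_zero₂]⟩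
    | add f g hf hg ihf ihg =>
      obtain ⟨r1, hr1, h1⟩ := ihf
      obtain ⟨r2, hr2, h2'⟩ := ihg
      exact ⟨r1 + r2, Submodule.add_mem _ hr1 hr2,
        fun x => by rw [map_add, B_add₂, h1, h2']⟩
    | smul c f hf ihf =>
      obtain ⟨r, hr, h1⟩ := ihf
      exact ⟨c • r, Submodule.smul_mem _ _ hr,
        fun x => by rw [map_smul, B_smul₂, h1, smul_eq_mul]⟩
  obtain ⟨r, hrmem, hr⟩ := hrep u hUQ
  -- r is B-orthogonal to the span containing it, hence zero
  have hperp : ∀ x ∈ Submodule.span ℚ RΨ, B x r = 0 := by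
    intro x hx
    induction hx using Submodule.span_induction with
    | mem α hα =>
      rw [← hr α]
      exact hinv α hα.1 hα.2
    | zero =>
      rw [B_symm, B_zero₂]
    | add x y hx hy ihx ihy =>
      rw [B_add₁, ihx, ihy, add_zero]
    | smul c x hx ihx =>
      rw [B_smul₁, ihx, mul_zero]
  have hr0 : r = 0 := by
    by_contra h
    exact (B_pos r h).ne' (hperp r hrmem)
  have hu0 : u = 0 := by
    apply pairext
    intro x
    rw [hr x, hr0, B_zero₂, map_zero]
  -- N • v ∈ M
  have hNv : (N : ℤ) • v ∈ M := by
    have hsum : ∑ w : ↥WΨ, (v - τ (↑w : V ≃ₗ[ℚ] V) v) ∈ M := by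
      apply Submodule.sum_mem
      intro w _
      exact ((P1 (↑w) w.2).1 v hv).2
    have heq : ∑ w : ↥WΨ, (v - τ (↑w : V ≃ₗ[ℚ] V) v) = (N : ℤ) • v := by
      rw [Finset.sum_sub_distrib, ← hudef, hu0, sub_zero, Finset.sum_const,
        Finset.card_univ, hNdef, Nat.card_eq_fintype_card]
      rw [natCast_zsmul]
    rwa [heq] at hsum
  -- Bézout
  have hcop : Nat.Coprime p N := hp.coprime_iff_not_dvd.mpr (fun h => hpW (h.trans hNdvd))
  have hbez : (p : ℤ) * Nat.gcdA p N + (N : ℤ) * Nat.gcdB p N = 1 := by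
    have h := Nat.gcd_eq_gcd_ab p N
    rw [Nat.Coprime.gcd_eq_one hcop] at h
    exact_mod_cast h.symm
  have hfinal : v = (Nat.gcdA p N) • ((p : ℤ) • v) + (Nat.gcdB p N) • ((N : ℤ) • v) := by
    rw [smul_smul, smul_smul, ← add_smul]
    have h1 : (Nat.gcdA p N * (p : ℤ) + Nat.gcdB p N * (N : ℤ)) = 1 := by linarith [hbez]
    rw [h1, one_smul]
  rw [hfinal]
  exact Submodule.add_mem M (Submodule.smul_mem M _ hpv) (Submodule.smul_mem M _ hNv)
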